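/- Let K be a Fraïssé structure with age 𝒦 and let A, B ∈ 𝒦 with an embedding f : A → B. If S ⊆ Emb(B, K) is thick, then T = {x ∘ f : x ∈ S} ⊆ Emb(A, K) is thick. -/

import Mathlib

open FirstOrder CategoryTheory

universe u v

/-- A structure is locally finite if it is the union of an increasing chain of finite
substructures. -/
def IsLocallyFinite (L : FirstOrder.Language.{u, v}) (M : Type) [L.Structure M] : Prop :=
  ∃ A : ℕ → L.Substructure M, Monotone A ∧ (∀ n, ((A n : Set M)).Finite) ∧
    (⋃ n, ((A n : Set M))) = Set.univ

/-- `M` is ultrahomogeneous: every isomorphism between finite substructures of `M`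
extends to an automorphism of `M`. -/
def IsUltrahomog (L : FirstOrder.Language.{u, v}) (M : Type) [L.Structure M] : Prop :=
  ∀ S T : L.Substructure M, (S : Set M).Finite → (T : Set M).Finite →
    ∀ f : S ≃[L] T, ∃ g : M ≃[L] M, ∀ x : S, g x = f x

/-- `S ⊆ Emb(A, M)` is thick: for every finite `B` embeddable in `M` with
`Emb(A, B) ≠ ∅`, there is `g ∈ Emb(B, M)` with `g ∘ Emb(A, B) ⊆ S`. -/
def Thick (L : FirstOrder.Language.{u, v}) (M : Type) [L.Structure M]
    (A : Bundled.{0} L.Structure) (S : Set (A ↪[L] M)) : Prop :=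
  ∀ B : Bundled.{0} L.Structure, Finite B → Nonempty (B ↪[L] M) →
    Nonempty (A ↪[L] B) → ∃ g : B ↪[L] M, ∀ h : A ↪[L] B, g.comp h ∈ S

/-- Extension property from ultrahomogeneity. -/
lemma extend_emb (L : FirstOrder.Language.{u, v}) (M : Type) [L.Structure M]
    (hultra : IsUltrahomog L M)
    (A : Type) [L.Structure A] (B : Type) [L.Structure B] (hA : Finite A)
    (u : A ↪[L] M) (w : B ↪[L] M) (f : A ↪[L] B) :
    ∃ v : B ↪[L] M, v.comp f = u := by
  set e : A ↪[L] M := w.comp f with he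
  have hfin1 : ((e.toHom.range : Set M)).Finite := by
    rw [Language.Hom.range_coe]; exact Set.finite_range _
  have hfin2 : ((u.toHom.range : Set M)).Finite := by
    rw [Language.Hom.range_coe]; exact Set.finite_range _
  let φ : e.toHom.range ≃[L] u.toHom.range := u.equivRange.comp e.equivRange.symm
  obtain ⟨g, hg⟩ := hultra _ _ hfin1 hfin2 φ
  refine ⟨g.toEmbedding.comp w, Language.Embedding.ext fun a => ?_⟩
  have h1 : g (e a) = φ (e.equivRange a) := by
    have := hg (e.equivRange a)
    simpa [Language.Embedding.equivRange_apply] using this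
  have h2 : φ (e.equivRange a) = (u.equivRange a : M) := by
    simp [φ, Language.Equiv.comp_apply]
  have : g (e a) = u a := by
    rw [h1, h2, Language.Embedding.equivRange_apply]
  simpa [he] using this

lemma finite_subset_chain {M : Type} (Ac : ℕ → Set M) (hmono : Monotone Ac)
    (huniv : (⋃ n, Ac n) = Set.univ) {s : Set M} (hs : s.Finite) : ∃ N, s ⊆ Ac N := by
  classical
  have hx : ∀ x : s, ∃ n, (x : M) ∈ Ac n := by
    intro x
    have : (x : M) ∈ ⋃ n, Ac n := by rw [huniv]; trivial
    simpa using this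
  choose idx hidx using hx
  haveI : Finite s := hs
  haveI : Fintype s := Fintype.ofFinite s
  refine ⟨Finset.univ.sup idx, fun x hxs => ?_⟩
  exact hmono (Finset.le_sup (Finset.mem_univ ⟨x, hxs⟩)) (hidx ⟨x, hxs⟩)

/-- If `K` is a Fraïssé structure, `A`, `B` are in its age, `f : A → B` is an
embedding, and `S ⊆ Emb(B, K)` is thick, then `{x ∘ f : x ∈ S} ⊆ Emb(A, K)` is
thick. -/
theorem thick_comp (L : FirstOrder.Language.{u, v}) (M : Type) [L.Structure M]
    (hcount : Countable M) (hinf : Infinite M)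
    (hlf : IsLocallyFinite L M) (hultra : IsUltrahomog L M)
    (A B : Bundled.{0} L.Structure) (hA : Finite A) (hB : Finite B)
    (hAM : Nonempty (A ↪[L] M)) (hBM : Nonempty (B ↪[L] M))
    (f : A ↪[L] B) (S : Set (B ↪[L] M)) (hS : Thick L M B S) :
    Thick L M A ((fun x : B ↪[L] M => x.comp f) '' S) := by
  classical
  intro C hC hCM hAC
  obtain ⟨e0⟩ := hCM
  obtain ⟨w⟩ := hBM
  -- for each h : A ↪ C, an embedding b h : B ↪ M with (b h) ∘ f = e0 ∘ h
  have hb : ∀ h : A ↪[L] C, ∃ v : B ↪[L] M, v.comp f = e0.comp h := fun h =>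
    extend_emb L M hultra A B hA (e0.comp h) w f
  choose b hb using hb
  -- Emb(A, C) is finite
  haveI : Finite (A ↪[L] C) :=
    Finite.of_injective (fun h : A ↪[L] C => (h : A → C)) (DFunLike.coe_injective)
  obtain ⟨Ac, hmono, hfin, huniv⟩ := hlf
  -- a member of the chain containing everything
  have hsfin : (Set.range e0 ∪ ⋃ h : A ↪[L] C, Set.range (b h)).Finite := by
    refine (Set.finite_range e0).union (Set.finite_iUnion fun h => Set.finite_range (b h))
  obtain ⟨N, hN⟩ := finite_subset_chain (fun n => (Ac n : Set M))
    (fun _ _ hle => SetLike.coe_subset_coe.2 (hmono hle)) huniv hsfin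
  have he0N : ∀ c : C, e0 c ∈ Ac N := fun c =>
    hN (Set.mem_union_left _ (Set.mem_range_self c))
  have hbN : ∀ (h : A ↪[L] C) (x : B), b h x ∈ Ac N := fun h x =>
    hN (Set.mem_union_right _ (Set.mem_iUnion.2 ⟨h, Set.mem_range_self x⟩))
  -- the bundled substructure D
  let D : Bundled.{0} L.Structure := ⟨(Ac N : L.Substructure M), inferInstance⟩
  haveI hDfin : Finite D := (hfin N).to_subtype
  have hDM : Nonempty (D ↪[L] M) := ⟨(Ac N).subtype⟩
  have h0 : A ↪[L] C := hAC.some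
  have hBD : Nonempty (B ↪[L] D) := ⟨(b h0).codRestrict (Ac N) (hbN h0)⟩
  obtain ⟨g, hg⟩ := hS D hDfin hDM hBD
  refine ⟨g.comp (e0.codRestrict (Ac N) he0N), fun h => ?_⟩
  refine ⟨g.comp ((b h).codRestrict (Ac N) (hbN h)), hg _, ?_⟩
  apply Language.Embedding.ext
  intro a
  have hba : b h (f a) = e0 (h a) := by
    have := congrFun (congrArg (DFunLike.coe) (hb h)) a
    simpa using this
  simp only [Language.Embedding.comp_apply]
  congr 1
  exact Subtype.ext hba
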